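/- Let p be a prime and r ≥ 2. The kernel of the reduction homomorphism SL₄(ℤ/p^rℤ) → SL₄(ℤ/p^{r-1}ℤ) equals the subgroup of SL₄(ℤ/p^rℤ) generated by all conjugates g(I + p^{r-1}E_{ij})g⁻¹ with g ∈ SL₄(ℤ/p^rℤ) and 1 ≤ i ≠ j ≤ 4. -/

import Mathlib

open Matrix

/-- The elementary matrix `I + p^(r-1) E i j` as an element of `SL₄(ℤ/p^r)`, for `i ≠ j`. -/
def elem (p r : ℕ) (i j : Fin 4) (h : i ≠ j) :
    Matrix.SpecialLinearGroup (Fin 4) (ZMod (p ^ r)) :=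
  ⟨1 + Matrix.single i j ((p : ZMod (p ^ r)) ^ (r - 1)), by
    simpa [Matrix.transvection] using
      Matrix.det_transvection_of_ne i j h ((p : ZMod (p ^ r)) ^ (r - 1))⟩

namespace Stmt8Aux

variable (p r : ℕ)

abbrev SL4 := Matrix.SpecialLinearGroup (Fin 4) (ZMod (p ^ r))

def K : ZMod (p ^ r) := (p : ZMod (p ^ r)) ^ (r - 1)

def Hset : Set (SL4 p r) :=
  {x : SL4 p r | ∃ (g : SL4 p r) (i j : Fin 4)
      (h : i ≠ j), x = g * elem p r i j h * g⁻¹}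

def H : Subgroup (SL4 p r) := Subgroup.closure (Hset p r)

variable {p r}

lemma K_mul_K (hr : 2 ≤ r) : K p r * K p r = 0 := by
  have h1 : (r - 1) + (r - 1) = r + (r - 2) := by omega
  rw [K, ← pow_add, h1, pow_add, ← Nat.cast_pow, ZMod.natCast_self, zero_mul]

lemma exists_eq_K_mul (hp0 : p ≠ 0) {x : ZMod (p ^ r)}
    (hx : (ZMod.cast x : ZMod (p ^ (r - 1))) = 0) : ∃ y, x = K p r * y := by
  haveI : NeZero (p ^ r) := ⟨pow_ne_zero r hp0⟩
  have h1 : ((x.val : ℕ) : ZMod (p ^ (r - 1))) = 0 := by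
    rw [ZMod.natCast_val, hx]
  obtain ⟨c, hc⟩ := (ZMod.natCast_eq_zero_iff _ _).mp h1
  refine ⟨(c : ZMod (p ^ r)), ?_⟩
  calc x = ((x.val : ℕ) : ZMod (p ^ r)) := (ZMod.natCast_zmod_val x).symm
  _ = ((p ^ (r-1) * c : ℕ) : ZMod (p ^ r)) := by rw [← hc]
  _ = K p r * c := by push_cast [K]; ring

lemma H_normal : (H p r).Normal := by
  constructor
  intro n hn g
  induction hn using Subgroup.closure_induction with
  | mem x hx =>
      obtain ⟨h, i, j, hij, rfl⟩ := hx
      exact Subgroup.subset_closure ⟨g * h, i, j, hij, by group⟩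
  | one => simpa using one_mem (H p r)
  | mul x y hx hy ihx ihy =>
      have := mul_mem ihx ihy
      rwa [show (g * x * g⁻¹) * (g * y * g⁻¹) = g * (x * y) * g⁻¹ by group] at this
  | inv x hx ih =>
      have := inv_mem ih
      rwa [show (g * x * g⁻¹)⁻¹ = g * x⁻¹ * g⁻¹ by group] at this

lemma mul_key (hr : 2 ≤ r) (A B : Matrix (Fin 4) (Fin 4) (ZMod (p ^ r))) :
    (1 + K p r • A) * (1 + K p r • B) = 1 + K p r • (A + B) := by
  have h := K_mul_K (p := p) hr
  have h2 : (1 + K p r • A) * (1 + K p r • B)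
      = 1 + K p r • B + K p r • A + (K p r • A) * (K p r • B) := by
    noncomm_ring
    simp only [smul_add, smul_smul]
  rw [h2, smul_mul_smul_comm, h, zero_smul, add_zero, smul_add]
  abel

def W (hr : 2 ≤ r) : AddSubgroup (Matrix (Fin 4) (Fin 4) (ZMod (p ^ r))) where
  carrier := {N | ∃ u ∈ H p r, (u : Matrix (Fin 4) (Fin 4) (ZMod (p ^ r))) = 1 + K p r • N}
  zero_mem' := ⟨1, one_mem _, by simp⟩
  add_mem' := by
    rintro A B ⟨u, hu, hu'⟩ ⟨v, hv, hv'⟩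
    exact ⟨u * v, mul_mem hu hv, by
      rw [Matrix.SpecialLinearGroup.coe_mul, hu', hv', mul_key hr]⟩
  neg_mem' := by
    rintro A ⟨u, hu, hu'⟩
    have hone : (u : Matrix (Fin 4) (Fin 4) (ZMod (p ^ r))) * (1 + K p r • (-A)) = 1 := by
      rw [hu', mul_key hr, add_neg_cancel, smul_zero, add_zero]
    have hdet : (1 + K p r • (-A)).det = 1 := by
      have h1 := congrArg Matrix.det hone
      rw [Matrix.det_mul, u.prop, one_mul, Matrix.det_one] at h1
      exact h1
    have hinv : u⁻¹ = (⟨1 + K p r • (-A), hdet⟩ : SL4 p r) :=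
      inv_eq_of_mul_eq_one_right (Subtype.ext (by
        exact hone))
    exact ⟨u⁻¹, inv_mem hu, by rw [hinv]⟩

lemma W_conj (hr : 2 ≤ r) (g : SL4 p r) {A : Matrix (Fin 4) (Fin 4) (ZMod (p ^ r))}
    (hA : A ∈ W (p := p) hr) :
    (g : Matrix (Fin 4) (Fin 4) (ZMod (p ^ r))) * A *
      ((g⁻¹ : SL4 p r) : Matrix (Fin 4) (Fin 4) (ZMod (p ^ r))) ∈ W (p := p) hr := by
  obtain ⟨u, hu, hu'⟩ := hA
  refine ⟨g * u * g⁻¹, (H_normal (p := p) (r := r)).conj_mem u hu g, ?_⟩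
  have h1 : (g : Matrix (Fin 4) (Fin 4) (ZMod (p ^ r))) *
      ((g⁻¹ : SL4 p r) : Matrix (Fin 4) (Fin 4) (ZMod (p ^ r))) = 1 := by
    rw [← Matrix.SpecialLinearGroup.coe_mul, mul_inv_cancel,
      Matrix.SpecialLinearGroup.coe_one]
  rw [Matrix.SpecialLinearGroup.coe_mul, Matrix.SpecialLinearGroup.coe_mul, hu',
    mul_add, mul_one, add_mul, h1, mul_smul_comm, smul_mul_assoc]

lemma pow_one_add_std (i j : Fin 4) (hij : i ≠ j) (x : ZMod (p ^ r)) (k : ℕ) :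
    (1 + Matrix.single i j x) ^ k
      = 1 + Matrix.single i j ((k : ZMod (p ^ r)) * x) := by
  induction k with
  | zero => simp
  | succ n ih =>
      rw [pow_succ, ih]
      have h2 : (1 + Matrix.single i j ((n : ZMod (p ^ r)) * x)) *
          (1 + Matrix.single i j x)
          = 1 + Matrix.single i j x
            + Matrix.single i j ((n : ZMod (p ^ r)) * x)
            + Matrix.single i j ((n : ZMod (p ^ r)) * x)
              * Matrix.single i j x := by noncomm_ring
      have hz := @Matrix.single_mul_single_of_ne (Fin 4) (Fin 4) (Fin 4) (ZMod (p ^ r)) _ _ _ _ _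
        ((n : ZMod (p ^ r)) * x) i j i j (Ne.symm hij) x
      rw [h2, hz, add_zero, add_assoc, ← Matrix.single_add]
      have hx : x + (n : ZMod (p ^ r)) * x = ((n + 1 : ℕ) : ZMod (p ^ r)) * x := by
        push_cast; ring
      rw [hx]

lemma elem_mem_H (i j : Fin 4) (hij : i ≠ j) : elem p r i j hij ∈ H p r :=
  Subgroup.subset_closure ⟨1, i, j, hij, by group⟩

lemma W_std (hr : 2 ≤ r) (hp0 : p ≠ 0) (i j : Fin 4) (hij : i ≠ j) (c : ZMod (p ^ r)) :
    Matrix.single i j c ∈ W (p := p) hr := by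
  haveI : NeZero (p ^ r) := ⟨pow_ne_zero r hp0⟩
  refine ⟨(elem p r i j hij) ^ (c.val), pow_mem (elem_mem_H i j hij) _, ?_⟩
  rw [Matrix.SpecialLinearGroup.coe_pow]
  show (1 + Matrix.single i j (K p r)) ^ c.val = _
  rw [pow_one_add_std i j hij _ c.val, Matrix.smul_single, smul_eq_mul]
  congr 2
  rw [ZMod.natCast_zmod_val, mul_comm]

lemma sbm_neg (i j : Fin 4) (a : ZMod (p ^ r)) :
    Matrix.single i j (-a) = -Matrix.single i j a := by
  simpa using (Matrix.smul_single (-1 : ZMod (p ^ r)) i j a).symm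

lemma W_diagpair (hr : 2 ≤ r) (hp0 : p ≠ 0) (i j : Fin 4) (hij : i ≠ j) (c : ZMod (p ^ r)) :
    Matrix.single j j c - Matrix.single i i c ∈ W (p := p) hr := by
  have hdetg : (1 + Matrix.single j i (1 : ZMod (p ^ r))).det = 1 := by
    simpa [Matrix.transvection] using
      Matrix.det_transvection_of_ne j i (Ne.symm hij) (1 : ZMod (p ^ r))
  have hdetg' : (1 + Matrix.single j i (-1 : ZMod (p ^ r))).det = 1 := by
    simpa [Matrix.transvection] using
      Matrix.det_transvection_of_ne j i (Ne.symm hij) (-1 : ZMod (p ^ r))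
  set g : SL4 p r := ⟨1 + Matrix.single j i (1 : ZMod (p ^ r)), hdetg⟩ with hg
  have hz := @Matrix.single_mul_single_of_ne (Fin 4) (Fin 4) (Fin 4) (ZMod (p ^ r)) _ _ _ _ _
    (1 : ZMod (p ^ r)) j i j i hij (-1 : ZMod (p ^ r))
  have hmul : (1 + Matrix.single j i (1 : ZMod (p ^ r))) *
      (1 + Matrix.single j i (-1 : ZMod (p ^ r))) = 1 := by
    have h2 : (1 + Matrix.single j i (1 : ZMod (p ^ r))) *
        (1 + Matrix.single j i (-1 : ZMod (p ^ r)))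
        = 1 + Matrix.single j i (-1 : ZMod (p ^ r))
          + Matrix.single j i (1 : ZMod (p ^ r))
          + Matrix.single j i (1 : ZMod (p ^ r))
            * Matrix.single j i (-1 : ZMod (p ^ r)) := by noncomm_ring
    rw [h2, hz, add_zero, add_assoc, ← Matrix.single_add]
    norm_num
  have hginv : g⁻¹ = (⟨1 + Matrix.single j i (-1 : ZMod (p ^ r)), hdetg'⟩ : SL4 p r) :=
    inv_eq_of_mul_eq_one_right (Subtype.ext (by
      exact hmul))
  have h3 := W_conj hr g (W_std hr hp0 i j hij c)
  rw [hginv] at h3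
  have hcalc : (1 + Matrix.single j i (1 : ZMod (p ^ r))) *
      Matrix.single i j c * (1 + Matrix.single j i (-1 : ZMod (p ^ r)))
      = Matrix.single i j c + Matrix.single j j c
        - Matrix.single i i c - Matrix.single j i c := by
    simp only [mul_add, add_mul, one_mul, mul_one, Matrix.single_mul_single_same]
    simp only [mul_neg_one, one_mul, sbm_neg]
    abel
  have h4 := add_mem (sub_mem h3 (W_std hr hp0 i j hij c)) (W_std hr hp0 j i (Ne.symm hij) c)
  have h5 : (g : Matrix (Fin 4) (Fin 4) (ZMod (p ^ r))) * Matrix.single i j c *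
        ((⟨1 + Matrix.single j i (-1 : ZMod (p ^ r)), hdetg'⟩ : SL4 p r) :
          Matrix (Fin 4) (Fin 4) (ZMod (p ^ r)))
        - Matrix.single i j c + Matrix.single j i c
      = Matrix.single j j c - Matrix.single i i c := by
    show (1 + Matrix.single j i (1 : ZMod (p ^ r))) * Matrix.single i j c *
        (1 + Matrix.single j i (-1 : ZMod (p ^ r)))
        - Matrix.single i j c + Matrix.single j i c = _
    rw [hcalc]
    abel
  exact h5 ▸ h4

lemma W_diag4 (hr : 2 ≤ r) (hp0 : p ≠ 0) (d : Fin 4 → ZMod (p ^ r))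
    (hd : K p r * (d 0 + d 1 + d 2 + d 3) = 0) :
    (∑ i, Matrix.single i i (d i)) ∈ W (p := p) hr := by
  have h33 : Matrix.single (3 : Fin 4) 3 (d 0 + d 1 + d 2 + d 3) ∈ W (p := p) hr :=
    ⟨1, one_mem _, by
      rw [Matrix.smul_single, smul_eq_mul, hd, Matrix.single_zero, add_zero,
        Matrix.SpecialLinearGroup.coe_one]⟩
  have h01 := W_diagpair hr hp0 1 0 (by decide) (d 0)
  have h12 := W_diagpair hr hp0 2 1 (by decide) (d 0 + d 1)
  have h23 := W_diagpair hr hp0 3 2 (by decide) (d 0 + d 1 + d 2)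
  have hsum := add_mem (add_mem (add_mem h01 h12) h23) h33
  have hid : (Matrix.single (0 : Fin 4) 0 (d 0) - Matrix.single 1 1 (d 0))
      + (Matrix.single (1 : Fin 4) 1 (d 0 + d 1)
        - Matrix.single 2 2 (d 0 + d 1))
      + (Matrix.single (2 : Fin 4) 2 (d 0 + d 1 + d 2)
        - Matrix.single 3 3 (d 0 + d 1 + d 2))
      + Matrix.single (3 : Fin 4) 3 (d 0 + d 1 + d 2 + d 3)
      = ∑ i, Matrix.single i i (d i) := by
    rw [Fin.sum_univ_four]
    simp only [Matrix.single_add]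
    abel
  exact hid ▸ hsum

lemma map_sbm {S : Type*} [CommRing S] (f : ZMod (p ^ r) →+* S) (i j : Fin 4)
    (x : ZMod (p ^ r)) :
    (Matrix.single i j x).map f = Matrix.single i j (f x) := by
  ext a b
  simp only [Matrix.map_apply, Matrix.single, Matrix.of_apply]
  split_ifs <;> simp

end Stmt8Aux

theorem stmt8 (p : ℕ) (hp : p.Prime) (r : ℕ) (hr : 2 ≤ r) :
    (Matrix.SpecialLinearGroup.map (n := Fin 4)
        (ZMod.castHom (pow_dvd_pow p (by omega : r - 1 ≤ r)) (ZMod (p ^ (r - 1))))).ker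
    = Subgroup.closure
        {x : Matrix.SpecialLinearGroup (Fin 4) (ZMod (p ^ r)) |
          ∃ (g : Matrix.SpecialLinearGroup (Fin 4) (ZMod (p ^ r))) (i j : Fin 4)
            (h : i ≠ j), x = g * elem p r i j h * g⁻¹} := by
  have hp0 : p ≠ 0 := hp.ne_zero
  ext M
  constructor
  · intro hM
    rw [MonoidHom.mem_ker] at hM
    have hcoe : (M : Matrix (Fin 4) (Fin 4) (ZMod (p ^ r))).map
        (ZMod.castHom (pow_dvd_pow p (by omega : r - 1 ≤ r)) (ZMod (p ^ (r - 1)))) = 1 := by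
      have h0 := congrArg Subtype.val hM
      simpa [RingHom.mapMatrix_apply] using h0
    have hent : ∀ i j, ∃ y,
        ((M : Matrix (Fin 4) (Fin 4) (ZMod (p ^ r))) - 1) i j = Stmt8Aux.K p r * y := by
      intro i j
      apply Stmt8Aux.exists_eq_K_mul hp0
      have h2 : ((M : Matrix (Fin 4) (Fin 4) (ZMod (p ^ r))).map
          (ZMod.castHom (pow_dvd_pow p (by omega : r - 1 ≤ r)) (ZMod (p ^ (r - 1))))) i j
          = (1 : Matrix (Fin 4) (Fin 4) (ZMod (p ^ (r - 1)))) i j := by rw [hcoe]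
      rw [Matrix.map_apply] at h2
      have h1 : (ZMod.castHom (pow_dvd_pow p (by omega : r - 1 ≤ r)) (ZMod (p ^ (r - 1))))
          (((M : Matrix (Fin 4) (Fin 4) (ZMod (p ^ r))) - 1) i j) = 0 := by
        rw [Matrix.sub_apply, map_sub, h2]
        have h3 : (ZMod.castHom (pow_dvd_pow p (by omega : r - 1 ≤ r)) (ZMod (p ^ (r - 1))))
            ((1 : Matrix (Fin 4) (Fin 4) (ZMod (p ^ r))) i j)
            = (1 : Matrix (Fin 4) (Fin 4) (ZMod (p ^ (r - 1)))) i j := by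
          rcases eq_or_ne i j with rfl | hne
          · simp only [Matrix.one_apply_eq, _root_.map_one]
          · simp only [Matrix.one_apply_ne hne, _root_.map_zero]
        rw [h3, sub_self]
      rwa [ZMod.castHom_apply] at h1
    choose A0 hA using hent
    set A : Matrix (Fin 4) (Fin 4) (ZMod (p ^ r)) := Matrix.of A0 with hAdef
    have hA : ∀ i j, ((M : Matrix (Fin 4) (Fin 4) (ZMod (p ^ r))) - 1) i j
        = Stmt8Aux.K p r * A i j := hA
    have hMval : (M : Matrix (Fin 4) (Fin 4) (ZMod (p ^ r))) = 1 + Stmt8Aux.K p r • A := by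
      ext i j
      rw [Matrix.add_apply, Matrix.smul_apply, smul_eq_mul, ← hA i j, Matrix.sub_apply]
      ring
    have htr : Stmt8Aux.K p r * A.trace = 0 := by
      have hdet := M.prop
      rw [hMval, Matrix.det_one_add_smul] at hdet
      have hKK : Stmt8Aux.K p r ^ 2 = 0 := by
        rw [pow_two]; exact Stmt8Aux.K_mul_K hr
      rw [hKK, mul_zero, add_zero] at hdet
      rw [mul_comm]
      exact add_eq_left.mp hdet
    have hdecomp : A = (∑ i, ∑ j ∈ Finset.univ.erase i, Matrix.single i j (A i j))
        + ∑ i, Matrix.single i i (A i i) := by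
      conv_lhs => rw [Matrix.matrix_eq_sum_single A]
      rw [← Finset.sum_add_distrib]
      refine Finset.sum_congr rfl fun i _ => ?_
      exact (Finset.sum_erase_add _ _ (Finset.mem_univ i)).symm
    have hAW : A ∈ Stmt8Aux.W (p := p) hr := by
      rw [hdecomp]
      refine add_mem (sum_mem fun i _ => sum_mem fun j hj => ?_) ?_
      · exact Stmt8Aux.W_std hr hp0 i j (Ne.symm (Finset.mem_erase.mp hj).1) _
      · apply Stmt8Aux.W_diag4 hr hp0
        rw [show A 0 0 + A 1 1 + A 2 2 + A 3 3 = A.trace by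
          simp [Matrix.trace, Matrix.diag, Fin.sum_univ_four]]
        exact htr
    obtain ⟨u, hu, hu'⟩ := hAW
    have huM : u = M := Subtype.ext (by rw [hu', hMval])
    exact huM ▸ hu
  · intro hM
    refine (Subgroup.closure_le _).mpr ?_ hM
    rintro x ⟨g, i, j, hij, rfl⟩
    rw [SetLike.mem_coe, MonoidHom.mem_ker]
    have hK0 : (ZMod.castHom (pow_dvd_pow p (by omega : r - 1 ≤ r)) (ZMod (p ^ (r - 1))))
        ((p : ZMod (p ^ r)) ^ (r - 1)) = 0 := by
      rw [map_pow, map_natCast, ← Nat.cast_pow, ZMod.natCast_self]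
    have helem : Matrix.SpecialLinearGroup.map (n := Fin 4)
        (ZMod.castHom (pow_dvd_pow p (by omega : r - 1 ≤ r)) (ZMod (p ^ (r - 1))))
        (elem p r i j hij) = 1 := by
      apply Subtype.ext
      show ((1 : Matrix (Fin 4) (Fin 4) (ZMod (p ^ r)))
          + Matrix.single i j ((p : ZMod (p ^ r)) ^ (r - 1))).map
          (⇑(ZMod.castHom (pow_dvd_pow p (by omega : r - 1 ≤ r)) (ZMod (p ^ (r - 1))))) = _
      rw [Matrix.map_add _ (map_add _), Matrix.map_one _ (map_zero _) (map_one _),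
        Stmt8Aux.map_sbm, hK0, Matrix.single_zero, add_zero,
        Matrix.SpecialLinearGroup.coe_one]
    rw [_root_.map_mul, _root_.map_mul, map_inv, helem, mul_one, mul_inv_cancel]
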